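/- For every β > 0 there is a constant C(β) > 0 (one may take C(β) = Σ_{n≥0} (1 + n·ln 2) · 2^{(−n+1)β}) such that the following holds: for every Borel measure μ on ℝ², every y ∈ ℝ², every K ≥ 0 and every t ∈ (0,1], if μ( B(y,r) ) ≤ K·r^β for all r ∈ (0,2], then ∫_{B(y, t^{1/2})} ( 1 + ln( t^{1/2}/|z−y| ) ) dμ(z) ≤ C(β)·K·t^{β/2}. -/

import Mathlib

open MeasureTheory Set Real

/-- Logarithmic integral estimate against a measure with power-law ball decay:
for every `β > 0` there is `C(β) > 0` such that for every Borel measure `μ` on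
`ℝ²`, every `y`, every `K ≥ 0` and every `t ∈ (0,1]`, if `μ(B(y,r)) ≤ K r^β` for
all `r ∈ (0,2]`, then
`∫_{B(y,√t)} (1 + ln(√t/|z-y|)) dμ(z) ≤ C(β) K t^{β/2}`. -/
theorem log_integral_power_law_bound (β : ℝ) (hβ : 0 < β) :
    ∃ C > (0 : ℝ), ∀ (μ : Measure (EuclideanSpace ℝ (Fin 2)))
      (y : EuclideanSpace ℝ (Fin 2)) (K : ℝ), 0 ≤ K →
      ∀ t ∈ Set.Ioc (0 : ℝ) 1,
      (∀ r ∈ Set.Ioc (0 : ℝ) 2,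
        μ (Metric.closedBall y r) ≤ ENNReal.ofReal (K * r ^ β)) →
      (∫⁻ z in Metric.closedBall y (Real.sqrt t),
          ENNReal.ofReal (1 + Real.log (Real.sqrt t / dist z y)) ∂μ) ≤
        ENNReal.ofReal (C * K * t ^ (β / 2)) := by
  classical
  set L := Real.log 2 with hLdef
  have hL0 : 0 < L := Real.log_pos one_lt_two
  set q : ℝ := (2 : ℝ) ^ (-β) with hqdef
  have hq0 : 0 < q := Real.rpow_pos_of_pos two_pos _
  have hq1 : q < 1 := by
    rw [hqdef]
    calc (2 : ℝ) ^ (-β) < (2 : ℝ) ^ (0 : ℝ) :=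
          Real.rpow_lt_rpow_left_iff one_lt_two |>.2 (by linarith)
      _ = 1 := Real.rpow_zero 2
  set a : ℕ → ℝ := fun n => (1 + ((n : ℝ) + 1) * L) * q ^ n with hadef
  have ha_nonneg : ∀ n, 0 ≤ a n := fun n => by
    have : (0:ℝ) ≤ (n:ℝ) := Nat.cast_nonneg n
    positivity
  have hsum : Summable a := by
    have h1 : Summable (fun n : ℕ => (1 + L) * q ^ n) :=
      (summable_geometric_of_lt_one hq0.le hq1).mul_left _
    have h2 : Summable (fun n : ℕ => L * ((n : ℝ) ^ 1 * q ^ n)) :=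
      (summable_pow_mul_geometric_of_norm_lt_one (R := ℝ) 1
        (by rw [Real.norm_eq_abs, abs_of_pos hq0]; exact hq1)).mul_left _
    refine (h1.add h2).congr fun n => ?_
    simp only [hadef, pow_one]
    ring
  refine ⟨∑' n, a n, ?_, ?_⟩
  · have h0 : (0:ℝ) < a 0 := by simp [hadef]; positivity
    calc (0:ℝ) < a 0 := h0
      _ ≤ ∑' n, a n := Summable.le_tsum hsum 0 fun i _ => ha_nonneg i
  intro μ y K hK t ht hball
  obtain ⟨ht0, ht1⟩ := ht
  set s := Real.sqrt t with hsdef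
  have hs0 : 0 < s := Real.sqrt_pos.2 ht0
  have hs1 : s ≤ 1 := by
    rw [hsdef, show (1:ℝ) = Real.sqrt 1 by simp]
    exact Real.sqrt_le_sqrt ht1
  -- s ^ β = t ^ (β/2)
  have hsβ : s ^ β = t ^ (β / 2) := by
    rw [hsdef, Real.sqrt_eq_rpow, ← Real.rpow_mul ht0.le]
    ring_nf
  -- radii
  set R : ℕ → ℝ := fun n => s * (1/2 : ℝ) ^ n with hRdef
  have hR0 : ∀ n, 0 < R n := fun n => by rw [hRdef]; positivity
  have hR2 : ∀ n, R n ≤ 2 := fun n => by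
    have h1 : ((1:ℝ)/2) ^ n ≤ 1 := pow_le_one₀ (by norm_num) (by norm_num)
    have := mul_le_one₀ hs1 (by positivity : (0:ℝ) ≤ (1/2:ℝ)^n) h1
    rw [hRdef]; simp only []; nlinarith
  -- (R n) ^ β = s ^ β * q ^ n
  have hhalf : ((1:ℝ)/2) ^ (β : ℝ) = q := by
    rw [hqdef, one_div, Real.inv_rpow (by norm_num : (0:ℝ) ≤ 2),
      ← Real.rpow_neg (by norm_num : (0:ℝ) ≤ 2)]
  have hRβ : ∀ n, (R n) ^ β = s ^ β * q ^ n := by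
    intro n
    rw [hRdef]
    rw [Real.mul_rpow hs0.le (by positivity)]
    congr 1
    rw [← Real.rpow_natCast ((1:ℝ)/2) n, ← Real.rpow_natCast q n,
      ← Real.rpow_mul (by norm_num : (0:ℝ) ≤ 1/2), ← hhalf,
      ← Real.rpow_mul (by norm_num : (0:ℝ) ≤ 1/2), mul_comm]
  -- μ {y} = 0
  have hy0 : μ {y} = 0 := by
    have hb : ∀ n : ℕ, μ {y} ≤ ENNReal.ofReal (K * s ^ β * q ^ n) := by
      intro n
      refine le_trans (measure_mono ?_) (le_trans (hball (R n) ⟨hR0 n, hR2 n⟩) ?_)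
      · intro z hz
        simp only [mem_singleton_iff] at hz
        simp [hz, Metric.mem_closedBall, (hR0 n).le]
      · rw [hRβ n, mul_assoc]
    have htend : Filter.Tendsto (fun n : ℕ => ENNReal.ofReal (K * s ^ β * q ^ n))
        Filter.atTop (nhds 0) := by
      have h1 : Filter.Tendsto (fun n : ℕ => K * s ^ β * q ^ n) Filter.atTop (nhds 0) := by
        have := (tendsto_pow_atTop_nhds_zero_of_lt_one hq0.le hq1).const_mul (K * s ^ β)
        simpa using this
      have := (ENNReal.continuous_ofReal.tendsto 0).comp h1
      simpa [Function.comp_def] using this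
    exact le_antisymm (ge_of_tendsto' htend hb) zero_le
  -- annuli
  set A : ℕ → Set (EuclideanSpace ℝ (Fin 2)) := fun n =>
    Metric.closedBall y (R n) \ Metric.closedBall y (R (n+1)) with hAdef
  have hcover : Metric.closedBall y s \ {y} ⊆ ⋃ n, A n := by
    intro z hz
    obtain ⟨hz1, hz2⟩ := hz
    have hd0 : 0 < dist z y := dist_pos.2 (by simpa using hz2)
    have hds : dist z y ≤ s := by simpa [Metric.mem_closedBall] using hz1
    have hex : ∃ n : ℕ, R (n+1) < dist z y := by
      obtain ⟨n, hn⟩ := exists_pow_lt_of_lt_one (div_pos hd0 hs0) (by norm_num : (1:ℝ)/2 < 1)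
      refine ⟨n, ?_⟩
      have : R (n+1) ≤ R n := by
        rw [hRdef]
        have : ((1:ℝ)/2) ^ (n+1) ≤ (1/2) ^ n :=
          pow_le_pow_of_le_one (by norm_num) (by norm_num) (Nat.le_succ n)
        nlinarith
      have hRn : R n < dist z y := by
        rw [hRdef]
        calc s * (1/2:ℝ)^n < s * (dist z y / s) := by
              exact mul_lt_mul_of_pos_left hn hs0
          _ = dist z y := by field_simp
      linarith
    let n0 := Nat.find hex
    have hspec : R (n0 + 1) < dist z y := Nat.find_spec hex
    have hle : dist z y ≤ R n0 := by
      rcases Nat.eq_zero_or_pos n0 with h | h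
      · rw [h]; rw [hRdef]; simpa using hds
      · obtain ⟨m, hm⟩ := Nat.exists_eq_succ_of_ne_zero h.ne'
        have := Nat.find_min hex (by omega : m < n0)
        rw [show m + 1 = n0 by omega] at this
        exact le_of_not_gt this
    exact mem_iUnion.2 ⟨n0, ⟨by simpa [Metric.mem_closedBall] using hle,
      by simp [Metric.mem_closedBall]; linarith⟩⟩
  -- per-annulus bound
  have hann : ∀ n : ℕ,
      (∫⁻ z in A n, ENNReal.ofReal (1 + Real.log (s / dist z y)) ∂μ) ≤
        ENNReal.ofReal (K * s ^ β * a n) := by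
    intro n
    have hptbd : ∀ z ∈ A n,
        ENNReal.ofReal (1 + Real.log (s / dist z y)) ≤
          ENNReal.ofReal (1 + ((n : ℝ) + 1) * L) := by
      intro z hz
      obtain ⟨hz1, hz2⟩ := hz
      rw [Metric.mem_closedBall, not_le] at hz2
      have hd0 : 0 < dist z y := lt_trans (hR0 (n+1)) hz2
      apply ENNReal.ofReal_le_ofReal
      have hdiv : s / dist z y ≤ (2:ℝ) ^ (n+1) := by
        have h1 : s * (1/2:ℝ)^(n+1) = s / 2^(n+1) := by
          rw [div_pow, one_pow]; ring
        rw [hRdef] at hz2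
        rw [div_le_iff₀ hd0]
        have h2 : s / 2^(n+1) < dist z y := by rw [← h1]; exact hz2
        have h3 : s < dist z y * 2^(n+1) := by
          rw [div_lt_iff₀ (by positivity : (0:ℝ) < 2^(n+1))] at h2
          linarith
        linarith
      have hlog : Real.log (s / dist z y) ≤ ((n:ℝ) + 1) * L := by
        calc Real.log (s / dist z y) ≤ Real.log ((2:ℝ) ^ (n+1)) :=
              Real.log_le_log (by positivity) hdiv
          _ = ((n:ℝ) + 1) * L := by rw [Real.log_pow]; push_cast; ring
      linarith
    calc (∫⁻ z in A n, ENNReal.ofReal (1 + Real.log (s / dist z y)) ∂μ)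
        ≤ ∫⁻ _ in A n, ENNReal.ofReal (1 + ((n : ℝ) + 1) * L) ∂μ :=
          setLIntegral_mono measurable_const hptbd
      _ = ENNReal.ofReal (1 + ((n : ℝ) + 1) * L) * μ (A n) := setLIntegral_const _ _
      _ ≤ ENNReal.ofReal (1 + ((n : ℝ) + 1) * L) * ENNReal.ofReal (K * (R n) ^ β) := by
          refine mul_le_mul_right ?_ _
          exact le_trans (measure_mono diff_subset) (hball (R n) ⟨hR0 n, hR2 n⟩)
      _ = ENNReal.ofReal (K * s ^ β * a n) := by
          rw [← ENNReal.ofReal_mul (by positivity)]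
          congr 1
          rw [hRβ n, hadef]
          ring
  -- assemble
  have hmain : (∫⁻ z in Metric.closedBall y s,
      ENNReal.ofReal (1 + Real.log (s / dist z y)) ∂μ) ≤
      ENNReal.ofReal (K * s ^ β * ∑' n, a n) := by
    have hsubset : Metric.closedBall y s ⊆ (Metric.closedBall y s \ {y}) ∪ {y} := by
      intro z hz
      by_cases h : z = y
      · exact Or.inr (by simp [h])
      · exact Or.inl ⟨hz, by simp [h]⟩
    calc (∫⁻ z in Metric.closedBall y s,
          ENNReal.ofReal (1 + Real.log (s / dist z y)) ∂μ)
        ≤ ∫⁻ z in (Metric.closedBall y s \ {y}) ∪ {y},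
            ENNReal.ofReal (1 + Real.log (s / dist z y)) ∂μ :=
          lintegral_mono_set hsubset
      _ ≤ (∫⁻ z in Metric.closedBall y s \ {y},
            ENNReal.ofReal (1 + Real.log (s / dist z y)) ∂μ) +
          ∫⁻ z in {y}, ENNReal.ofReal (1 + Real.log (s / dist z y)) ∂μ :=
          lintegral_union_le _ _ _
      _ = ∫⁻ z in Metric.closedBall y s \ {y},
            ENNReal.ofReal (1 + Real.log (s / dist z y)) ∂μ := by
          rw [Measure.restrict_eq_zero.2 hy0, lintegral_zero_measure, add_zero]
      _ ≤ ∫⁻ z in ⋃ n, A n, ENNReal.ofReal (1 + Real.log (s / dist z y)) ∂μ :=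
          lintegral_mono_set hcover
      _ ≤ ∑' n, ∫⁻ z in A n, ENNReal.ofReal (1 + Real.log (s / dist z y)) ∂μ :=
          lintegral_iUnion_le _ _
      _ ≤ ∑' n, ENNReal.ofReal (K * s ^ β * a n) := ENNReal.tsum_le_tsum hann
      _ = ENNReal.ofReal (∑' n, K * s ^ β * a n) :=
          (ENNReal.ofReal_tsum_of_nonneg (fun n => by
            have := ha_nonneg n; positivity) (hsum.mul_left _)).symm
      _ = ENNReal.ofReal (K * s ^ β * ∑' n, a n) := by rw [tsum_mul_left]
  calc (∫⁻ z in Metric.closedBall y s,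
        ENNReal.ofReal (1 + Real.log (s / dist z y)) ∂μ)
      ≤ ENNReal.ofReal (K * s ^ β * ∑' n, a n) := hmain
    _ = ENNReal.ofReal ((∑' n, a n) * K * t ^ (β / 2)) := by rw [hsβ]; congr 1; ring
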